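/- arXiv:1802.04089 — 3 statements merged into one kernel-verified Lean document; each statement's English description precedes it below -/
import Mathlib

section
/- Let n ∈ ℕ, β > (n+1)/2 and d > 1. Then, with σ = 1, (1/(2√π)) · (1+d²)^{-β+n/2} / √(β - (n-1)/2) < F̃(d) < (1/√(2π)) · (1+d²)^{-β+n/2} / √(β - (n+1)/2). -/
open MeasureTheory Filter Set
open scoped ENNReal Pointwise RealInnerProductSpace

noncomputable section

/-- `ℝ^n` with the Euclidean structure. -/
abbrev Euc (n : ℕ) : Type := EuclideanSpace ℝ (Fin n)

/-- The beta distribution `ν_β` on `ℝ^n`: density `c_{n,β} (1-‖x‖²)^β` on the unit ball. -/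
def betaMeasure (n : ℕ) (β : ℝ) : Measure (Euc n) :=
  volume.withDensity fun x =>
    ENNReal.ofReal (if ‖x‖ ≤ 1 then
      Real.pi ^ (-(n : ℝ) / 2) * Real.Gamma (β + (n : ℝ) / 2 + 1) / Real.Gamma (β + 1)
        * (1 - ‖x‖ ^ 2) ^ β
    else 0)

/-- `F(d) = ∫_d^1 f_β(t) dt`, the tail of the one-dimensional marginal of `ν_β`. -/
def betaF (n : ℕ) (β : ℝ) (d : ℝ) : ℝ :=
  ∫ t in d..1,
    Real.pi ^ (-(1 : ℝ) / 2) * Real.Gamma (β + (n : ℝ) / 2 + 1) /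
        Real.Gamma (β + ((n : ℝ) + 1) / 2) *
      (1 - t ^ 2) ^ (β + ((n : ℝ) - 1) / 2)

/-- The beta-prime distribution `ν̃_{β,σ}` on `ℝ^n`. -/
def betaPrimeMeasure (n : ℕ) (β σ : ℝ) : Measure (Euc n) :=
  volume.withDensity fun x =>
    ENNReal.ofReal (σ ^ (-(n : ℝ)) * Real.pi ^ (-(n : ℝ) / 2) * Real.Gamma β /
        Real.Gamma (β - (n : ℝ) / 2) * (1 + ‖x‖ ^ 2 / σ ^ 2) ^ (-β))

/-- `F̃(d) = ∫_d^∞ f̃_{β,σ}(t) dt`, the tail of the one-dimensional marginal of `ν̃_{β,σ}`. -/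
def betaPrimeF (n : ℕ) (β σ : ℝ) (d : ℝ) : ℝ :=
  ∫ t in Set.Ioi d,
    σ⁻¹ * Real.pi ^ (-(1 : ℝ) / 2) * Real.Gamma (β - ((n : ℝ) - 1) / 2) /
        Real.Gamma (β - (n : ℝ) / 2) *
      (1 + t ^ 2 / σ ^ 2) ^ (-β + ((n : ℝ) - 1) / 2)

/-- Lebesgue volume of the Euclidean unit ball in `ℝ^n`. -/
def ballVol (n : ℕ) : ℝ := (volume (Metric.closedBall (0 : Euc n) 1)).toReal

/-- Expected Lebesgue volume of the convex hull of `N` i.i.d. points with law `ν`. -/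
def expVolHull (n N : ℕ) (ν : Measure (Euc n)) : ℝ :=
  ∫ X : Fin N → Euc n, (volume (convexHull ℝ (Set.range X))).toReal
    ∂Measure.pi fun _ => ν

/-- Expected `μ`-measure of the convex hull of `N` i.i.d. points with law `ν`. -/
def expMeasHull (n N : ℕ) (ν μ : Measure (Euc n)) : ℝ :=
  ∫ X : Fin N → Euc n, (μ (convexHull ℝ (Set.range X))).toReal
    ∂Measure.pi fun _ => ν

/-- The uniform probability measure on the closed unit ball of `ℝ^n`. -/
def unifBall (n : ℕ) : Measure (Euc n) :=
  (volume (Metric.closedBall (0 : Euc n) 1))⁻¹ •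
    volume.restrict (Metric.closedBall (0 : Euc n) 1)

/-- The standard Gaussian measure on `ℝ^n`. -/
def stdGaussian (n : ℕ) : Measure (Euc n) :=
  volume.withDensity fun x =>
    ENNReal.ofReal ((2 * Real.pi) ^ (-(n : ℝ) / 2) * Real.exp (-‖x‖ ^ 2 / 2))

/-- A measure `μ` on `ℝ^n` is log-concave. -/
def IsLogConcaveM {n : ℕ} (μ : Measure (Euc n)) : Prop :=
  ∀ A B : Set (Euc n), IsCompact A → IsCompact B → ∀ l : ℝ, 0 < l → l < 1 →
    (μ A).toReal ^ (1 - l) * (μ B).toReal ^ l ≤ (μ ((1 - l) • A + l • B)).toReal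

/-- A measure `μ` on `ℝ^n` is isotropic. -/
def IsIsotropicM {n : ℕ} (μ : Measure (Euc n)) : Prop :=
  ∀ θ : Euc n, ‖θ‖ = 1 →
    (∫ x, (inner ℝ x θ : ℝ) ∂μ) = 0 ∧ (∫ x, (inner ℝ x θ : ℝ) ^ 2 ∂μ) = 1

namespace BetaPrimeAux


lemma gammaSqLe (x : ℝ) (hx : 0 < x) :
    Real.Gamma (x + 1/2) ^ 2 ≤ Real.Gamma x * Real.Gamma (x + 1) := by
  have hx1 : (0:ℝ) < x + 1 := by linarith
  have hG : 0 < Real.Gamma x := Real.Gamma_pos_of_pos hx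
  have hG1 : 0 < Real.Gamma (x + 1) := Real.Gamma_pos_of_pos hx1
  have hGm : 0 < Real.Gamma (x + 1/2) := Real.Gamma_pos_of_pos (by linarith)
  have h := Real.convexOn_log_Gamma.2 (mem_Ioi.2 hx) (mem_Ioi.2 hx1)
      (by norm_num : (0:ℝ) ≤ 1/2) (by norm_num : (0:ℝ) ≤ 1/2) (by norm_num)
  simp only [Function.comp, smul_eq_mul] at h
  have he : (1/2 : ℝ) * x + (1/2 : ℝ) * (x + 1) = x + 1/2 := by ring
  rw [he] at h
  have hlog : Real.log (Real.Gamma (x + 1/2) ^ 2) ≤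
      Real.log (Real.Gamma x * Real.Gamma (x + 1)) := by
    rw [Real.log_pow, Real.log_mul hG.ne' hG1.ne']
    push_cast
    linarith
  exact (Real.log_le_log_iff (by positivity) (by positivity)).1 hlog


lemma gammaUpper (γ : ℝ) (hγ : 1 < γ) :
    Real.Gamma (γ + 1/2) ≤ Real.sqrt γ * Real.Gamma γ := by
  have hG : 0 < Real.Gamma γ := Real.Gamma_pos_of_pos (by linarith)
  have hGm : 0 < Real.Gamma (γ + 1/2) := Real.Gamma_pos_of_pos (by linarith)
  have h := gammaSqLe γ (by linarith)
  rw [Real.Gamma_add_one (by positivity : γ ≠ 0)] at h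
  have h2 : Real.Gamma (γ + 1/2) ^ 2 ≤ γ * Real.Gamma γ ^ 2 := by nlinarith
  have := Real.sqrt_le_sqrt h2
  rwa [Real.sqrt_sq hGm.le, Real.sqrt_mul (by linarith : (0:ℝ) ≤ γ),
    Real.sqrt_sq hG.le] at this

lemma gammaLower (γ : ℝ) (hγ : 1 < γ) :
    Real.sqrt (γ - 1/2) * Real.Gamma γ ≤ Real.Gamma (γ + 1/2) := by
  have hG : 0 < Real.Gamma γ := Real.Gamma_pos_of_pos (by linarith)
  have hGm : 0 < Real.Gamma (γ + 1/2) := Real.Gamma_pos_of_pos (by linarith)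
  have hG2 : 0 < Real.Gamma (γ - 1/2) := Real.Gamma_pos_of_pos (by linarith)
  have h := gammaSqLe (γ - 1/2) (by linarith)
  have e1 : γ - 1/2 + 1/2 = γ := by ring
  have e2 : γ - 1/2 + 1 = γ + 1/2 := by ring
  rw [e1, e2] at h
  -- Gamma (γ + 1/2) = (γ - 1/2) * Gamma (γ - 1/2)
  have hrec : Real.Gamma (γ + 1/2) = (γ - 1/2) * Real.Gamma (γ - 1/2) := by
    rw [← e2, Real.Gamma_add_one (by linarith : γ - 1/2 ≠ 0)]
  have h2 : (γ - 1/2) * Real.Gamma γ ^ 2 ≤ Real.Gamma (γ + 1/2) ^ 2 := by nlinarith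
  have := Real.sqrt_le_sqrt h2
  rwa [Real.sqrt_sq hGm.le, Real.sqrt_mul (by linarith : (0:ℝ) ≤ γ - 1/2),
    Real.sqrt_sq hG.le] at this

lemma auxJ (γ d : ℝ) (hγ : 1 < γ) (hd : 0 < d) :
    IntegrableOn (fun t : ℝ => t * (1 + t ^ 2) ^ (-γ - 1/2)) (Ioi d) ∧
    ∫ t in Ioi d, t * (1 + t ^ 2) ^ (-γ - 1/2) =
      (1 + d ^ 2) ^ ((1:ℝ)/2 - γ) / (2 * γ - 1) := by
  have h2γ : (0:ℝ) < 2 * γ - 1 := by linarith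
  set F : ℝ → ℝ := fun t => -(1 + t ^ 2) ^ ((1:ℝ)/2 - γ) / (2 * γ - 1) with hF
  have hderiv : ∀ t ∈ Ici d, HasDerivAt F (t * (1 + t ^ 2) ^ (-γ - 1/2)) t := by
    intro t _
    have h1 : (0:ℝ) < 1 + t ^ 2 := by positivity
    have h2 : HasDerivAt (fun t : ℝ => 1 + t ^ 2) (2 * t) t := by
      simpa using (hasDerivAt_pow 2 t).const_add 1
    have h3 : HasDerivAt (fun t : ℝ => (1 + t ^ 2) ^ ((1:ℝ)/2 - γ))
        ((((1:ℝ)/2 - γ) * (1 + t ^ 2) ^ ((1:ℝ)/2 - γ - 1)) * (2 * t)) t :=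
      by have := (Real.hasDerivAt_rpow_const (x := 1 + t ^ 2) (p := (1:ℝ)/2 - γ) (Or.inl h1.ne')).comp t h2; exact this
    have h4 : HasDerivAt F (-((((1:ℝ)/2 - γ) * (1 + t ^ 2) ^ ((1:ℝ)/2 - γ - 1)) * (2 * t)) /
        (2 * γ - 1)) t := (h3.neg).div_const (2 * γ - 1)
    convert h4 using 1
    have he : (1:ℝ)/2 - γ - 1 = -γ - 1/2 := by ring
    rw [he]
    field_simp [h2γ.ne']
    rw [show (1:ℝ) - γ * 2 = -(γ * 2 - 1) by ring, mul_neg, neg_div, neg_neg, mul_div_assoc,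
      div_self (by linarith), mul_one]
  have hpos : ∀ t ∈ Ioi d, 0 ≤ t * (1 + t ^ 2) ^ (-γ - 1/2) := by
    intro t ht
    have : 0 < t := lt_trans hd ht
    positivity
  have htend : Tendsto F atTop (nhds 0) := by
    have h1 : Tendsto (fun t : ℝ => 1 + t ^ 2) atTop atTop :=
      tendsto_atTop_add_const_left _ 1 (tendsto_pow_atTop (two_ne_zero))
    have h2 : Tendsto (fun x : ℝ => x ^ (-(γ - 1/2))) atTop (nhds 0) :=
      tendsto_rpow_neg_atTop (by linarith)
    have h3 : Tendsto (fun t : ℝ => (1 + t ^ 2) ^ ((1:ℝ)/2 - γ)) atTop (nhds 0) := by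
      have := h2.comp h1
      simpa [Function.comp_def, show -(γ - 1/2) = (1:ℝ)/2 - γ by ring] using this
    have h4 := (h3.neg).div_const (2 * γ - 1)
    rw [hF]
    simpa using h4
  constructor
  · exact integrableOn_Ioi_deriv_of_nonneg' hderiv hpos htend
  · rw [integral_Ioi_of_hasDerivAt_of_nonneg' hderiv hpos htend]
    simp only [hF]
    field_simp
    ring

lemma auxIint (γ d : ℝ) (hγ : 1 < γ) :
    IntegrableOn (fun t : ℝ => (1 + t ^ 2) ^ (-γ)) (Ioi d) := by
  have hmeas : AEStronglyMeasurable (fun t : ℝ => (1 + t ^ 2) ^ (-γ))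
      (volume.restrict (Ioi d)) :=
    (Continuous.rpow_const (continuous_const.add (continuous_pow 2))
      (fun x => Or.inl (by show (1:ℝ) + x ^ 2 ≠ 0; positivity))).aestronglyMeasurable
  refine Integrable.mono (integrable_inv_one_add_sq.integrableOn) hmeas ?_
  filter_upwards with t
  have h1 : (1:ℝ) ≤ 1 + t ^ 2 := by nlinarith [sq_nonneg t]
  rw [Real.norm_eq_abs, Real.norm_eq_abs, abs_of_pos (by positivity),
    abs_of_pos (by positivity), ← Real.rpow_neg_one]
  exact Real.rpow_le_rpow_of_exponent_le h1 (by linarith)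

lemma auxPt (t γ : ℝ) (ht : 1 < t) :
    t * (1 + t ^ 2) ^ (-γ - 1/2) < (1 + t ^ 2) ^ (-γ) ∧
    (1 + t ^ 2) ^ (-γ) < Real.sqrt 2 * (t * (1 + t ^ 2) ^ (-γ - 1/2)) := by
  have ht0 : 0 < t := by linarith
  have h1 : (0:ℝ) < 1 + t ^ 2 := by positivity
  have hsplit : (1 + t ^ 2) ^ (-γ) = (1 + t ^ 2) ^ ((1:ℝ)/2) * (1 + t ^ 2) ^ (-γ - 1/2) := by
    rw [← Real.rpow_add h1]; norm_num
  have hhalf : (1 + t ^ 2) ^ ((1:ℝ)/2) = Real.sqrt (1 + t ^ 2) := by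
    rw [Real.sqrt_eq_rpow]
  have hp : (0:ℝ) < (1 + t ^ 2) ^ (-γ - 1/2) := Real.rpow_pos_of_pos h1 _
  constructor
  · rw [hsplit, hhalf]
    have : t < Real.sqrt (1 + t ^ 2) := by
      rw [show (1 + t ^ 2 : ℝ) = Real.sqrt (1 + t ^ 2) ^ 2 from
        (Real.sq_sqrt (by positivity)).symm] at h1
      nlinarith [Real.sqrt_nonneg (1 + t ^ 2), Real.sq_sqrt (show (0:ℝ) ≤ 1 + t ^ 2 by positivity)]
    exact mul_lt_mul_of_pos_right this hp
  · rw [hsplit, hhalf, ← mul_assoc]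
    have : Real.sqrt (1 + t ^ 2) < Real.sqrt 2 * t := by
      have e : Real.sqrt 2 * t = Real.sqrt (2 * t ^ 2) := by
        rw [Real.sqrt_mul (by norm_num), Real.sqrt_sq ht0.le]
      rw [e]
      exact Real.sqrt_lt_sqrt (by positivity) (by nlinarith)
    exact mul_lt_mul_of_pos_right this hp


lemma auxStrict (γ d : ℝ) (hγ : 1 < γ) (hd : 1 < d) :
    (∫ t in Ioi d, t * (1 + t ^ 2) ^ (-γ - 1/2)) <
      (∫ t in Ioi d, (1 + t ^ 2) ^ (-γ)) ∧
    (∫ t in Ioi d, (1 + t ^ 2) ^ (-γ)) <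
      Real.sqrt 2 * ∫ t in Ioi d, t * (1 + t ^ 2) ^ (-γ - 1/2) := by
  have hf := auxIint γ d hγ
  have hg := (auxJ γ d hγ (by linarith)).1
  have hsub1 : Ioi d ⊆ (Function.support fun t : ℝ =>
      (1 + t ^ 2) ^ (-γ) - t * (1 + t ^ 2) ^ (-γ - 1/2)) ∩ Ioi d := by
    intro t ht
    refine ⟨?_, ht⟩
    have := (auxPt t γ (lt_trans hd ht)).1
    simp only [Function.mem_support]
    intro hc; rw [sub_eq_zero] at hc; linarith
  have hsub2 : Ioi d ⊆ (Function.support fun t : ℝ =>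
      Real.sqrt 2 * (t * (1 + t ^ 2) ^ (-γ - 1/2)) - (1 + t ^ 2) ^ (-γ)) ∩ Ioi d := by
    intro t ht
    refine ⟨?_, ht⟩
    have := (auxPt t γ (lt_trans hd ht)).2
    simp only [Function.mem_support]
    intro hc; rw [sub_eq_zero] at hc; linarith
  have hvol : (0 : ℝ≥0∞) < volume (Ioi d) := by simp [Real.volume_Ioi]
  have hint1 : IntegrableOn (fun t : ℝ =>
      (1 + t ^ 2) ^ (-γ) - t * (1 + t ^ 2) ^ (-γ - 1/2)) (Ioi d) := hf.sub hg
  have hint2 : IntegrableOn (fun t : ℝ =>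
      Real.sqrt 2 * (t * (1 + t ^ 2) ^ (-γ - 1/2)) - (1 + t ^ 2) ^ (-γ)) (Ioi d) :=
    (hg.const_mul (Real.sqrt 2)).sub hf
  constructor
  · have h1 : 0 < ∫ t in Ioi d,
        ((1 + t ^ 2) ^ (-γ) - t * (1 + t ^ 2) ^ (-γ - 1/2)) := by
      refine (setIntegral_pos_iff_support_of_nonneg_ae ?_ hint1).mpr
        (lt_of_lt_of_le hvol (measure_mono hsub1))
      filter_upwards [ae_restrict_mem measurableSet_Ioi] with t ht
      have := (auxPt t γ (lt_trans hd ht)).1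
      simp only [Pi.zero_apply]
      linarith
    rw [integral_sub hf hg] at h1
    linarith
  · have h1 : 0 < ∫ t in Ioi d,
        (Real.sqrt 2 * (t * (1 + t ^ 2) ^ (-γ - 1/2)) - (1 + t ^ 2) ^ (-γ)) := by
      refine (setIntegral_pos_iff_support_of_nonneg_ae ?_ hint2).mpr
        (lt_of_lt_of_le hvol (measure_mono hsub2))
      filter_upwards [ae_restrict_mem measurableSet_Ioi] with t ht
      have := (auxPt t γ (lt_trans hd ht)).2
      simp only [Pi.zero_apply]
      linarith
    rw [integral_sub (hg.const_mul _) hf, integral_const_mul] at h1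
    linarith

end BetaPrimeAux

/-- Bounds for the marginal tail `F̃` of the beta-prime distribution with `σ = 1`
(equation (2.1)). -/
theorem betaPrimeF_bounds (n : ℕ) (hn : 1 ≤ n) (β : ℝ) (hβ : ((n : ℝ) + 1) / 2 < β)
    (d : ℝ) (hd : 1 < d) :
    1 / (2 * Real.sqrt Real.pi) * (1 + d ^ 2) ^ (-β + (n : ℝ) / 2) /
        Real.sqrt (β - ((n : ℝ) - 1) / 2) < betaPrimeF n β 1 d ∧
    betaPrimeF n β 1 d < 1 / Real.sqrt (2 * Real.pi) * (1 + d ^ 2) ^ (-β + (n : ℝ) / 2) /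
        Real.sqrt (β - ((n : ℝ) + 1) / 2) := by
  set γ : ℝ := β - ((n : ℝ) - 1) / 2 with hγdef
  have hγ : 1 < γ := by rw [hγdef]; linarith
  have e1 : -β + (n : ℝ) / 2 = (1:ℝ)/2 - γ := by rw [hγdef]; ring
  have e2 : β - ((n : ℝ) + 1) / 2 = γ - 1 := by rw [hγdef]; ring
  have e3 : β - (n : ℝ) / 2 = γ - 1/2 := by rw [hγdef]; ring
  have e4 : -β + ((n : ℝ) - 1) / 2 = -γ := by rw [hγdef]; ring
  have hB : betaPrimeF n β 1 d =
      Real.pi ^ (-(1:ℝ)/2) * Real.Gamma γ / Real.Gamma (γ - 1/2) *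
        ∫ t in Set.Ioi d, (1 + t ^ 2) ^ (-γ) := by
    rw [betaPrimeF]
    simp only [inv_one, one_mul, one_pow, div_one, e4, e3, ← hγdef]
    rw [integral_const_mul]
  obtain ⟨hJint, hJval⟩ := BetaPrimeAux.auxJ γ d hγ (by linarith)
  obtain ⟨hJI, hIJ⟩ := BetaPrimeAux.auxStrict γ d hγ hd
  set I : ℝ := ∫ t in Set.Ioi d, (1 + t ^ 2) ^ (-γ) with hI
  set J : ℝ := ∫ t in Set.Ioi d, t * (1 + t ^ 2) ^ (-γ - 1/2) with hJ
  set A : ℝ := (1 + d ^ 2) ^ ((1:ℝ)/2 - γ) with hA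
  have hApos : 0 < A := Real.rpow_pos_of_pos (by positivity) _
  rw [hB, e1, e2, ← hA]
  have hπ : Real.pi ^ (-(1:ℝ)/2) = (Real.sqrt Real.pi)⁻¹ := by
    rw [show (-(1:ℝ)/2) = -(1/2 : ℝ) by norm_num, Real.rpow_neg Real.pi_pos.le,
      Real.sqrt_eq_rpow]
  have hsplit : Real.sqrt (2 * Real.pi) = Real.sqrt 2 * Real.sqrt Real.pi :=
    Real.sqrt_mul (by norm_num) _
  rw [hπ, hsplit]
  -- abstract all quantities
  have hG3le : Real.Gamma (γ + 1/2) ≤ Real.sqrt γ * Real.Gamma γ := BetaPrimeAux.gammaUpper γ hγ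
  have hG3ge : Real.sqrt (γ - 1/2) * Real.Gamma γ ≤ Real.Gamma (γ + 1/2) :=
    BetaPrimeAux.gammaLower γ hγ
  have hrec : (2 * γ - 1) * Real.Gamma (γ - 1/2) = 2 * Real.Gamma (γ + 1/2) := by
    rw [show γ + 1/2 = (γ - 1/2) + 1 by ring,
      Real.Gamma_add_one (ne_of_gt (by linarith : (0:ℝ) < γ - 1/2))]
    ring
  have hs12 : Real.sqrt (γ - 1) ≤ Real.sqrt (γ - 1/2) := Real.sqrt_le_sqrt (by linarith)
  have hG1 : 0 < Real.Gamma γ := Real.Gamma_pos_of_pos (by linarith)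
  have hG2 : 0 < Real.Gamma (γ - 1/2) := Real.Gamma_pos_of_pos (by linarith)
  have hG3 : 0 < Real.Gamma (γ + 1/2) := Real.Gamma_pos_of_pos (by linarith)
  have hP : 0 < Real.sqrt Real.pi := Real.sqrt_pos.2 Real.pi_pos
  have hsγ : 0 < Real.sqrt γ := Real.sqrt_pos.2 (by linarith)
  have hs1 : 0 < Real.sqrt (γ - 1) := Real.sqrt_pos.2 (by linarith)
  have hq : Real.sqrt 2 * Real.sqrt 2 = 2 := Real.mul_self_sqrt (by norm_num)
  have hqpos : 0 < Real.sqrt 2 := Real.sqrt_pos.2 (by norm_num)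
  have hc : (0:ℝ) < 2 * γ - 1 := by linarith
  rw [hJval] at hJI hIJ
  set c : ℝ := 2 * γ - 1
  set G1 : ℝ := Real.Gamma γ
  set G2 : ℝ := Real.Gamma (γ - 1/2)
  set G3 : ℝ := Real.Gamma (γ + 1/2)
  set P : ℝ := Real.sqrt Real.pi
  set sγ : ℝ := Real.sqrt γ
  set s1 : ℝ := Real.sqrt (γ - 1)
  set s2 : ℝ := Real.sqrt (γ - 1/2)
  set q : ℝ := Real.sqrt 2
  clear_value I J A c G1 G2 G3 P sγ s1 s2 q
  clear hJint hB hJval hI hJ hA hγdef e1 e2 e3 e4 hγ hβ hπ hsplit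
  constructor
  · have h0 : 1 / (2 * P) * A / sγ ≤ P⁻¹ * G1 / G2 * (A / c) := by
      rw [show (1 / (2 * P) * A / sγ) = A / (2 * P * sγ) by ring,
        show (P⁻¹ * G1 / G2 * (A / c)) = G1 * A / (P * G2 * c) by
          field_simp,
        div_le_div_iff₀ (by positivity) (by positivity)]
      calc A * (P * G2 * c) = A * P * (c * G2) := by ring
        _ = A * P * (2 * G3) := by rw [hrec]
        _ ≤ A * P * (2 * (sγ * G1)) := by
            nlinarith [mul_le_mul_of_nonneg_left hG3le
              (show (0:ℝ) ≤ 2 * (A * P) by positivity)]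
        _ = G1 * A * (2 * P * sγ) := by ring
    calc 1 / (2 * P) * A / sγ ≤ P⁻¹ * G1 / G2 * (A / c) := h0
      _ < P⁻¹ * G1 / G2 * I := (mul_lt_mul_iff_right₀ (by positivity)).2 hJI
  · have h0 : P⁻¹ * G1 / G2 * (q * (A / c)) ≤ 1 / (q * P) * A / s1 := by
      rw [show (P⁻¹ * G1 / G2 * (q * (A / c))) = q * G1 * A / (P * G2 * c) by
          field_simp,
        show (1 / (q * P) * A / s1) = A / (q * P * s1) by ring,
        div_le_div_iff₀ (by positivity) (by positivity)]
      have k : s1 * G1 ≤ G3 := le_trans (by nlinarith) hG3ge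
      calc q * G1 * A * (q * P * s1) = (q * q) * (A * P * (s1 * G1)) := by ring
        _ = 2 * (A * P * (s1 * G1)) := by rw [hq]
        _ ≤ 2 * (A * P * G3) := by
            nlinarith [mul_le_mul_of_nonneg_left k
              (show (0:ℝ) ≤ A * P by positivity)]
        _ = A * (P * (c * G2)) := by rw [hrec]; ring
        _ = A * (P * G2 * c) := by ring
    calc P⁻¹ * G1 / G2 * I < P⁻¹ * G1 / G2 * (q * (A / c)) :=
          (mul_lt_mul_iff_right₀ (by positivity)).2 hIJ
      _ ≤ 1 / (q * P) * A / s1 := h0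

end
end

section
/- Let (a_n) and (b_n) be sequences of real numbers with a_n ≥ 0, b_n > 1/2 and b_n → ∞. If a_n⁴/b_n → 0, then ∫_{a_n}^∞ (1 + t²/(2b_n))^{-b_n} dt ∼ ∫_{a_n}^∞ e^{-t²/2} dt as n → ∞; if additionally a_n → ∞, then ∫_{a_n}^∞ (1 + t²/(2b_n))^{-b_n} dt ∼ e^{-a_n²/2}/a_n as n → ∞. -/
open MeasureTheory Filter Set
open scoped ENNReal Pointwise RealInnerProductSpace

noncomputable section

section TailAuxSec

lemma TA_gauss_int (a : ℝ) : IntegrableOn (fun t : ℝ => Real.exp (-t ^ 2 / 2)) (Set.Ioi a) := by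
  have h : (fun t : ℝ => Real.exp (-t ^ 2 / 2)) = fun t : ℝ => Real.exp (-(1/2) * t ^ 2) := by
    funext t; ring_nf
  rw [h]; exact (integrable_exp_neg_mul_sq (by norm_num)).integrableOn

lemma TA_base_pos {b : ℝ} (hb : 0 < b) (t : ℝ) : 0 < 1 + t ^ 2 / (2 * b) := by positivity

lemma TA_f_cont {b : ℝ} (hb : 0 < b) :
    Continuous (fun t : ℝ => (1 + t ^ 2 / (2 * b)) ^ (-b)) := by
  refine Continuous.rpow_const (by continuity) fun t => Or.inl ?_
  exact (TA_base_pos hb t).ne'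

lemma TA_ptlow {b : ℝ} (hb : 0 < b) (t : ℝ) :
    Real.exp (-t ^ 2 / 2) ≤ (1 + t ^ 2 / (2 * b)) ^ (-b) := by
  set x := t ^ 2 / (2 * b) with hx
  have hx0 : 0 ≤ x := by positivity
  have h1 : (1 + x) ^ b ≤ Real.exp (t ^ 2 / 2) := by
    calc (1 + x) ^ b ≤ Real.exp x ^ b :=
          Real.rpow_le_rpow (by linarith) (by linarith [Real.add_one_le_exp x]) hb.le
      _ = Real.exp (x * b) := (Real.exp_mul x b).symm
      _ = Real.exp (t ^ 2 / 2) := by rw [hx]; congr 1; field_simp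
  rw [Real.rpow_neg (by linarith : (0:ℝ) ≤ 1 + x), neg_div, Real.exp_neg]
  exact inv_anti₀ (Real.rpow_pos_of_pos (by linarith) b) h1

lemma TA_ptup {b : ℝ} (hb : 0 < b) (t : ℝ) :
    (1 + t ^ 2 / (2 * b)) ^ (-b) ≤ Real.exp (-t ^ 2 / 2 + t ^ 4 / (4 * b)) := by
  set x := t ^ 2 / (2 * b) with hx
  have hx0 : 0 ≤ x := by positivity
  have hpos : (0:ℝ) < 1 + x := by linarith
  have hlog : x - x ^ 2 ≤ Real.log (1 + x) := by
    have h := Real.log_le_sub_one_of_pos (show (0:ℝ) < (1 + x)⁻¹ by positivity)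
    rw [Real.log_inv] at h
    have h2 : x - x ^ 2 ≤ 1 - (1 + x)⁻¹ := by
      have h3 : (1:ℝ) - (1 + x)⁻¹ = x / (1 + x) := by field_simp; ring
      rw [h3, le_div_iff₀ hpos]; nlinarith
    linarith
  rw [Real.rpow_def_of_pos hpos]
  apply Real.exp_le_exp.2
  have h3 : Real.log (1 + x) * (-b) ≤ (x - x ^ 2) * (-b) :=
    mul_le_mul_of_nonpos_right hlog (by linarith)
  refine h3.trans_eq ?_
  rw [hx]; field_simp; ring

lemma TA_f_int {b : ℝ} (hb : 1/2 < b) (a : ℝ) :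
    IntegrableOn (fun t : ℝ => (1 + t ^ 2 / (2 * b)) ^ (-b)) (Set.Ioi a) := by
  have hb0 : (0:ℝ) < b := by linarith
  set T := max a 1 with hT
  have hT1 : (1:ℝ) ≤ T := le_max_right _ _
  have hT0 : (0:ℝ) < T := by linarith
  have h1 : IntegrableOn (fun t : ℝ => (1 + t ^ 2 / (2 * b)) ^ (-b)) (Set.Ioc a T) :=
    ((TA_f_cont hb0).integrableOn_Icc).mono_set Ioc_subset_Icc_self
  have h2 : IntegrableOn (fun t : ℝ => (1 + t ^ 2 / (2 * b)) ^ (-b)) (Set.Ioi T) := by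
    have hint : IntegrableOn (fun t : ℝ => (2*b) ^ b * t ^ (-(2*b))) (Set.Ioi T) :=
      (integrableOn_Ioi_rpow_of_lt (by linarith) hT0).const_mul _
    refine hint.mono' ((TA_f_cont hb0).aestronglyMeasurable.restrict) ?_
    filter_upwards [ae_restrict_mem measurableSet_Ioi] with t ht
    have ht0 : (0:ℝ) < t := lt_of_lt_of_le hT0 ht.le
    rw [Real.norm_eq_abs, abs_of_nonneg (Real.rpow_nonneg (TA_base_pos hb0 t).le _)]
    have hle : (1 + t ^ 2 / (2 * b)) ^ (-b) ≤ (t ^ 2 / (2 * b)) ^ (-b) :=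
      Real.rpow_le_rpow_of_nonpos (by positivity) (by linarith [sq_nonneg t]) (by linarith)
    refine hle.trans_eq ?_
    rw [Real.div_rpow (by positivity) (by positivity), Real.rpow_neg (by positivity : (0:ℝ) ≤ 2*b),
      div_eq_mul_inv, inv_inv, mul_comm]
    congr 1
    rw [← Real.rpow_natCast t 2, ← Real.rpow_mul ht0.le]
    norm_num
  have := h1.union h2
  rwa [Set.Ioc_union_Ioi_eq_Ioi (le_max_left a 1)] at this

lemma TA_lin_hasDeriv {b c : ℝ} (hb : 1 < b) (hc : 0 < c) (x : ℝ) (hx : x ∈ Set.Ici c) :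
    HasDerivAt (fun t : ℝ => -(2 * b / (c * (b - 1))) * (1 + c * t / (2 * b)) ^ (1 - b))
      ((1 + c * x / (2 * b)) ^ (-b)) x := by
  have hb0 : (0:ℝ) < b := by linarith
  have hpos : (0:ℝ) < 1 + c * x / (2 * b) := by
    have : 0 < c * x := mul_pos hc (lt_of_lt_of_le hc hx)
    positivity
  have h1 : HasDerivAt (fun t : ℝ => 1 + c * t / (2 * b)) (c / (2 * b)) x := by
    simpa using (((hasDerivAt_id x).const_mul c).div_const (2*b)).const_add 1
  have h2 := (h1.rpow_const (p := 1 - b) (Or.inl hpos.ne')).const_mul (-(2 * b / (c * (b - 1))))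
  refine h2.congr_deriv ?_
  rw [show (1:ℝ) - b - 1 = -b from by ring]
  set y := (1 + c * x / (2 * b)) ^ (-b) with hy
  have hc0 : c ≠ 0 := hc.ne'
  have hb1 : b - 1 ≠ 0 := by linarith
  field_simp
  ring

lemma TA_lin_tendsto {b c : ℝ} (hb : 1 < b) (hc : 0 < c) :
    Tendsto (fun t : ℝ => -(2 * b / (c * (b - 1))) * (1 + c * t / (2 * b)) ^ (1 - b))
      atTop (nhds 0) := by
  have hb0 : (0:ℝ) < b := by linarith
  have hu : Tendsto (fun t : ℝ => 1 + c * t / (2 * b)) atTop atTop := by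
    apply tendsto_atTop_add_const_left
    exact (tendsto_id.const_mul_atTop hc).atTop_div_const (by positivity)
  have h0 : Tendsto (fun y : ℝ => y ^ (1 - b)) atTop (nhds 0) := by
    have := tendsto_rpow_neg_atTop (show (0:ℝ) < b - 1 by linarith)
    simpa [neg_sub] using this
  have := (h0.comp hu).const_mul (-(2 * b / (c * (b - 1))))
  simpa using this

lemma TA_lin_int {b c : ℝ} (hb : 1 < b) (hc : 0 < c) :
    IntegrableOn (fun t : ℝ => (1 + c * t / (2 * b)) ^ (-b)) (Set.Ioi c) :=
  integrableOn_Ioi_deriv_of_nonneg' (TA_lin_hasDeriv hb hc)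
    (fun x hx => Real.rpow_nonneg (by
      have : 0 < c * x := mul_pos hc (lt_trans hc hx)
      positivity) _) (TA_lin_tendsto hb hc)

lemma TA_lin_tail {b c : ℝ} (hb : 1 < b) (hc : 0 < c) :
    ∫ t in Set.Ioi c, (1 + c * t / (2 * b)) ^ (-b)
      = 2 * b / (c * (b - 1)) * (1 + c ^ 2 / (2 * b)) ^ (1 - b) := by
  rw [integral_Ioi_of_hasDerivAt_of_nonneg' (TA_lin_hasDeriv hb hc)
    (fun x hx => Real.rpow_nonneg (by
      have : 0 < c * x := mul_pos hc (lt_trans hc hx)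
      positivity) _) (TA_lin_tendsto hb hc)]
  rw [show c * c = c ^ 2 from (sq c).symm]
  ring

lemma TA_gauss_tendsto_zero : Tendsto (fun t : ℝ => Real.exp (-t ^ 2 / 2)) atTop (nhds 0) := by
  apply Real.tendsto_exp_atBot.comp
  have hmono : ∀ t : ℝ, -t ^ 2 / 2 ≤ -(t - 1) := fun t => by nlinarith [sq_nonneg (t-1)]
  apply tendsto_atBot_mono hmono
  exact tendsto_neg_atBot_iff.2 (tendsto_atTop_add_const_right _ _ tendsto_id)

lemma TA_tgauss_hasDeriv (x : ℝ) :
    HasDerivAt (fun t : ℝ => -Real.exp (-t ^ 2 / 2)) (x * Real.exp (-x ^ 2 / 2)) x := by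
  have h1 : HasDerivAt (fun t : ℝ => -t ^ 2 / 2) (-x) x := by
    have := (hasDerivAt_pow 2 x).neg.div_const 2
    refine this.congr_deriv ?_
    push_cast; ring
  have := (h1.exp).neg
  refine this.congr_deriv ?_
  ring

lemma TA_tgauss {a : ℝ} (ha : 0 ≤ a) :
    ∫ t in Set.Ioi a, t * Real.exp (-t ^ 2 / 2) = Real.exp (-a ^ 2 / 2) := by
  rw [integral_Ioi_of_hasDerivAt_of_nonneg' (fun x _ => TA_tgauss_hasDeriv x)
    (fun x hx => mul_nonneg (le_of_lt (lt_of_le_of_lt ha hx)) (Real.exp_pos _).le)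
    (by simpa using TA_gauss_tendsto_zero.neg)]
  simp

lemma TA_tgauss_int {a : ℝ} (ha : 0 ≤ a) :
    IntegrableOn (fun t : ℝ => t * Real.exp (-t ^ 2 / 2)) (Set.Ioi a) :=
  integrableOn_Ioi_deriv_of_nonneg' (fun x _ => TA_tgauss_hasDeriv x)
    (fun x hx => mul_nonneg (le_of_lt (lt_of_le_of_lt ha hx)) (Real.exp_pos _).le)
    (by simpa using TA_gauss_tendsto_zero.neg)

lemma TA_mills_upper {a : ℝ} (ha : 0 < a) :
    ∫ t in Set.Ioi a, Real.exp (-t ^ 2 / 2) ≤ Real.exp (-a ^ 2 / 2) / a := by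
  have h1 : ∫ t in Set.Ioi a, Real.exp (-t ^ 2 / 2)
      ≤ ∫ t in Set.Ioi a, a⁻¹ * (t * Real.exp (-t ^ 2 / 2)) := by
    refine setIntegral_mono_on (TA_gauss_int a) ((TA_tgauss_int ha.le).const_mul _)
      measurableSet_Ioi fun t ht => ?_
    rw [← mul_assoc]
    nth_rewrite 1 [← one_mul (Real.exp (-t ^ 2 / 2))]
    have h2 : (1:ℝ) ≤ a⁻¹ * t := by
      rw [← div_eq_inv_mul, le_div_iff₀ ha]
      simpa using (le_of_lt ht)
    exact mul_le_mul_of_nonneg_right h2 (Real.exp_pos _).le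
  rw [MeasureTheory.integral_const_mul, TA_tgauss ha.le] at h1
  rw [div_eq_inv_mul]
  exact h1

lemma TA_mills_hasDeriv (x : ℝ) :
    HasDerivAt (fun t : ℝ => -(t * Real.exp (-t ^ 2 / 2) / (t ^ 2 + 1)))
      (Real.exp (-x ^ 2 / 2) * ((x ^ 4 + 2 * x ^ 2 - 1) / (x ^ 2 + 1) ^ 2)) x := by
  have hexp : HasDerivAt (fun t : ℝ => -t ^ 2 / 2) (-x) x := by
    have := (hasDerivAt_pow 2 x).neg.div_const 2
    refine this.congr_deriv ?_
    push_cast; ring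
  have hnum : HasDerivAt (fun t : ℝ => t * Real.exp (-t ^ 2 / 2))
      (Real.exp (-x ^ 2 / 2) + x * (-x * Real.exp (-x ^ 2 / 2))) x := by
    have := (hasDerivAt_id x).mul hexp.exp
    refine this.congr_deriv ?_
    simp only [id_eq, one_mul]
    ring
  have hden : HasDerivAt (fun t : ℝ => t ^ 2 + 1) (2 * x) x := by
    have := (hasDerivAt_pow 2 x).add_const 1
    refine this.congr_deriv ?_
    push_cast; ring
  have hd0 : x ^ 2 + 1 ≠ 0 := by positivity
  have := (hnum.div hden hd0).neg
  refine this.congr_deriv ?_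
  field_simp
  ring

lemma TA_mills_tendsto : Tendsto (fun t : ℝ => -(t * Real.exp (-t ^ 2 / 2) / (t ^ 2 + 1)))
    atTop (nhds 0) := by
  have h : Tendsto (fun t : ℝ => t * Real.exp (-t ^ 2 / 2) / (t ^ 2 + 1)) atTop (nhds 0) := by
    apply tendsto_of_tendsto_of_tendsto_of_le_of_le' tendsto_const_nhds TA_gauss_tendsto_zero
    · filter_upwards [eventually_ge_atTop (0:ℝ)] with t ht
      positivity
    · filter_upwards [eventually_ge_atTop (0:ℝ)] with t ht
      rw [div_le_iff₀ (by positivity)]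
      have h1 : (0:ℝ) ≤ Real.exp (-t^2/2) := (Real.exp_pos _).le
      nlinarith [mul_nonneg h1 (sq_nonneg (t-1)), mul_nonneg ht h1]
  simpa using h.neg

lemma TA_mills_lower {a : ℝ} (ha : 1 ≤ a) :
    a / (a ^ 2 + 1) * Real.exp (-a ^ 2 / 2) ≤ ∫ t in Set.Ioi a, Real.exp (-t ^ 2 / 2) := by
  have hq : ∫ t in Set.Ioi a, Real.exp (-t ^ 2 / 2) * ((t ^ 4 + 2 * t ^ 2 - 1) / (t ^ 2 + 1) ^ 2)
      = a * Real.exp (-a ^ 2 / 2) / (a ^ 2 + 1) := by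
    rw [integral_Ioi_of_hasDerivAt_of_nonneg' (fun x _ => TA_mills_hasDeriv x)
      (fun x hx => by
        have hx1 : (1:ℝ) < x := lt_of_le_of_lt ha hx
        have : (0:ℝ) ≤ x ^ 4 + 2 * x ^ 2 - 1 := by nlinarith
        positivity)
      TA_mills_tendsto]
    ring
  have hmono : ∫ t in Set.Ioi a, Real.exp (-t ^ 2 / 2) * ((t ^ 4 + 2 * t ^ 2 - 1) / (t ^ 2 + 1) ^ 2)
      ≤ ∫ t in Set.Ioi a, Real.exp (-t ^ 2 / 2) := by
    refine setIntegral_mono_on ?_ (TA_gauss_int a) measurableSet_Ioi fun t ht => ?_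
    · exact integrableOn_Ioi_deriv_of_nonneg' (fun x _ => TA_mills_hasDeriv x)
        (fun x hx => by
          have hx1 : (1:ℝ) < x := lt_of_le_of_lt ha hx
          have : (0:ℝ) ≤ x ^ 4 + 2 * x ^ 2 - 1 := by nlinarith
          positivity)
        TA_mills_tendsto
    · nth_rewrite 2 [← mul_one (Real.exp (-t ^ 2 / 2))]
      refine mul_le_mul_of_nonneg_left ?_ (Real.exp_pos _).le
      rw [div_le_one (by positivity)]
      nlinarith [sq_nonneg t]
  rw [hq] at hmono
  calc a / (a ^ 2 + 1) * Real.exp (-a ^ 2 / 2) = a * Real.exp (-a ^ 2 / 2) / (a ^ 2 + 1) := by ring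
    _ ≤ _ := hmono

lemma TA_G_lower {a : ℝ} (ha : 0 ≤ a) :
    Real.exp (-(a + 1) ^ 2 / 2) ≤ ∫ t in Set.Ioi a, Real.exp (-t ^ 2 / 2) := by
  have h1 : Real.exp (-(a + 1) ^ 2 / 2) * (volume (Set.Ioc a (a + 1))).toReal
      ≤ ∫ t in Set.Ioc a (a + 1), Real.exp (-t ^ 2 / 2) := by
    refine setIntegral_ge_of_const_le_real measurableSet_Ioc (by simp) (fun t ht => ?_)
      ((TA_gauss_int a).mono_set Set.Ioc_subset_Ioi_self)
    apply Real.exp_le_exp.2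
    have h2 : t ^ 2 ≤ (a + 1) ^ 2 := by nlinarith [ht.1, ht.2]
    linarith
  rw [Real.volume_Ioc] at h1
  simp only [add_sub_cancel_left, ENNReal.ofReal_one, ENNReal.toReal_one, mul_one] at h1
  refine h1.trans (setIntegral_mono_set (TA_gauss_int a) ?_ ?_)
  · filter_upwards with t; exact (Real.exp_pos _).le
  · exact (Set.Ioc_subset_Ioi_self).eventuallyLE

lemma TA_G_pos {a : ℝ} (ha : 0 ≤ a) : 0 < ∫ t in Set.Ioi a, Real.exp (-t ^ 2 / 2) :=
  lt_of_lt_of_le (Real.exp_pos _) (TA_G_lower ha)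

end TailAuxSec

/-- Lemma 2.4 (a): Gaussian-type asymptotics of the tail integral. -/
theorem tail_integral_gaussian_regime
    (a b : ℕ → ℝ) (ha : ∀ n, 0 ≤ a n) (hb : ∀ n, 1 / 2 < b n)
    (hbtop : Tendsto b atTop atTop)
    (h : Tendsto (fun n : ℕ => (a n) ^ 4 / b n) atTop (nhds 0)) :
    Tendsto (fun n : ℕ =>
        (∫ t in Set.Ioi (a n), (1 + t ^ 2 / (2 * b n)) ^ (-(b n))) /
          ∫ t in Set.Ioi (a n), Real.exp (-t ^ 2 / 2)) atTop (nhds 1) ∧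
    (Tendsto a atTop atTop →
      Tendsto (fun n : ℕ =>
          (∫ t in Set.Ioi (a n), (1 + t ^ 2 / (2 * b n)) ^ (-(b n))) /
            (Real.exp (-(a n) ^ 2 / 2) / a n)) atTop (nhds 1)) := by
  have hb0 : ∀ n, (0:ℝ) < b n := fun n => lt_trans (by norm_num) (hb n)
  set I : ℕ → ℝ := fun n => ∫ t in Set.Ioi (a n), (1 + t ^ 2 / (2 * b n)) ^ (-(b n)) with hIdef
  set G : ℕ → ℝ := fun n => ∫ t in Set.Ioi (a n), Real.exp (-t ^ 2 / 2) with hGdef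
  have hGpos : ∀ n, 0 < G n := fun n => TA_G_pos (ha n)
  have hone : ∀ n, 1 ≤ I n / G n := by
    intro n
    refine (one_le_div (hGpos n)).2 ?_
    exact setIntegral_mono_on (TA_gauss_int _) (TA_f_int (hb n) _) measurableSet_Ioi
      (fun t _ => TA_ptlow (hb0 n) t)
  set c : ℕ → ℝ := fun n => max (a n + 1) (b n ^ (5⁻¹:ℝ)) with hcdef
  have hc1 : ∀ n, (1:ℝ) ≤ c n := fun n => le_trans (by linarith [ha n]) (le_max_left _ _)
  have hc0 : ∀ n, (0:ℝ) < c n := fun n => lt_of_lt_of_le one_pos (hc1 n)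
  have hca : ∀ n, a n + 1 ≤ c n := fun n => le_max_left _ _
  have hctop : Tendsto c atTop atTop :=
    tendsto_atTop_mono (fun n => le_max_right _ _)
      ((tendsto_rpow_atTop (by norm_num : (0:ℝ) < 5⁻¹)).comp hbtop)
  have hc4 : Tendsto (fun n => c n ^ 4 / b n) atTop (nhds 0) := by
    have hupper : ∀ n, c n ^ 4 / b n ≤ 8*(a n^4/b n) + 8/b n + b n ^ (-(5⁻¹:ℝ)) := by
      intro n
      have hbn := hb0 n
      have hx : (b n ^ (5⁻¹:ℝ))^(4:ℕ) = b n ^ ((4:ℝ)/5) := by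
        rw [← Real.rpow_natCast (b n ^ (5⁻¹:ℝ)) 4, ← Real.rpow_mul hbn.le]
        norm_num
      have h1 : c n ^ 4 ≤ 8*(a n^4) + 8 + b n ^ ((4:ℝ)/5) := by
        simp only [hcdef]
        rcases max_cases (a n + 1) (b n ^ (5⁻¹:ℝ)) with ⟨heq, _⟩ | ⟨heq, _⟩ <;> rw [heq]
        · nlinarith [ha n, Real.rpow_nonneg hbn.le ((4:ℝ)/5),
            mul_nonneg (sq_nonneg (a n - 1)) (show (0:ℝ) ≤ 7*(a n)^2 + 10*(a n) + 7 by nlinarith [ha n, sq_nonneg (a n)])]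
        · rw [hx]
          nlinarith [pow_nonneg (ha n) 4]
      have hrw : b n ^ ((4:ℝ)/5) / b n = b n ^ (-(5⁻¹:ℝ)) := by
        rw [show b n ^ (-(5⁻¹:ℝ)) = b n ^ ((4:ℝ)/5 - 1) from by norm_num,
          Real.rpow_sub hbn, Real.rpow_one]
      calc c n ^ 4 / b n ≤ (8*(a n^4) + 8 + b n ^ ((4:ℝ)/5)) / b n :=
            (div_le_div_iff_of_pos_right hbn).2 h1
        _ = 8*(a n^4/b n) + 8/b n + b n ^ ((4:ℝ)/5) / b n := by ring
        _ = 8*(a n^4/b n) + 8/b n + b n ^ (-(5⁻¹:ℝ)) := by rw [hrw]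
    have hu : Tendsto (fun n => 8*(a n^4/b n) + 8/b n + b n ^ (-(5⁻¹:ℝ))) atTop (nhds 0) := by
      have h1 := h.const_mul (8:ℝ)
      have h2 : Tendsto (fun n => (8:ℝ)/b n) atTop (nhds 0) := tendsto_const_nhds.div_atTop hbtop
      have h3 : Tendsto (fun n => b n ^ (-(5⁻¹:ℝ))) atTop (nhds 0) :=
        (tendsto_rpow_neg_atTop (by norm_num : (0:ℝ) < 5⁻¹)).comp hbtop
      simpa using (h1.add h2).add h3
    refine tendsto_of_tendsto_of_tendsto_of_le_of_le' tendsto_const_nhds hu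
      (Eventually.of_forall fun n => div_nonneg (pow_nonneg (hc0 n).le 4) (hb0 n).le)
      (Eventually.of_forall hupper)
  have hc2 : Tendsto (fun n => c n ^ 2 / (2 * b n)) atTop (nhds 0) := by
    refine tendsto_of_tendsto_of_tendsto_of_le_of_le' tendsto_const_nhds hc4
      (Eventually.of_forall fun n => div_nonneg (pow_nonneg (hc0 n).le 2)
        (by linarith [hb0 n])) (Eventually.of_forall fun n => ?_)
    have hbn := hb0 n
    have h1 : (1:ℝ) ≤ c n ^ 2 := by nlinarith [hc1 n]
    rw [div_le_div_iff₀ (by positivity) hbn]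
    nlinarith [mul_nonneg (mul_nonneg (sub_nonneg.2 h1) (sq_nonneg (c n))) hbn.le,
      mul_nonneg (pow_nonneg (hc0 n).le 4) hbn.le]
  have hc44 : Tendsto (fun n => c n ^ 4 / (4 * b n)) atTop (nhds 0) := by
    have h44 := hc4.div_const 4
    rw [zero_div] at h44
    refine h44.congr fun n => ?_
    ring
  have hE : Tendsto (fun n => Real.exp (c n ^ 4 / (4 * b n))) atTop (nhds 1) := by
    have := (Real.continuous_exp.tendsto 0).comp hc44
    simpa [Function.comp_def] using this
  set K : ℕ → ℝ := fun n => 2 * b n / (c n * (b n - 1)) * (1 + c n ^ 2 / (2 * b n))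
      * Real.exp (c n ^ 4 / (4 * b n)) with hKdef
  have hK : Tendsto K atTop (nhds 0) := by
    have h24 : Tendsto (fun n => (24:ℝ) / c n) atTop (nhds 0) :=
      tendsto_const_nhds.div_atTop hctop
    refine tendsto_of_tendsto_of_tendsto_of_le_of_le' tendsto_const_nhds h24 ?_ ?_
    · filter_upwards [hbtop.eventually_ge_atTop 2] with n hb2
      have h1 : (0:ℝ) < b n - 1 := by linarith
      have h2 := hc0 n
      simp only [hKdef]
      positivity
    · filter_upwards [hbtop.eventually_ge_atTop 2, hc44.eventually_lt_const one_pos,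
        hc2.eventually_lt_const one_pos] with n hb2 hc44n hc2n
      have hcn := hc0 n
      have hbn := hb0 n
      have hb1 : (0:ℝ) < b n - 1 := by linarith
      have h1 : 2 * b n / (c n * (b n - 1)) ≤ 4 / c n := by
        rw [div_le_div_iff₀ (by positivity) hcn]
        nlinarith
      have h2 : 1 + c n ^ 2 / (2 * b n) ≤ 2 := by linarith
      have h2' : (0:ℝ) ≤ 1 + c n ^ 2 / (2 * b n) := by positivity
      have h3 : Real.exp (c n ^ 4 / (4 * b n)) ≤ 3 := by
        calc Real.exp (c n ^ 4 / (4 * b n)) ≤ Real.exp 1 := Real.exp_le_exp.2 hc44n.le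
          _ ≤ 3 := by linarith [Real.exp_one_lt_d9]
      calc K n ≤ (4 / c n) * 2 * 3 := by
            simp only [hKdef]
            refine mul_le_mul (mul_le_mul h1 h2 h2' (by positivity)) h3
              (Real.exp_pos _).le (by positivity)
        _ = 24 / c n := by ring
  have hup : ∀ᶠ n in atTop, I n / G n ≤ Real.exp (c n ^ 4 / (4 * b n)) + K n := by
    filter_upwards [hbtop.eventually_ge_atTop 2] with n hb2
    have hbn := hb0 n
    have hb1 : (1:ℝ) < b n := by linarith
    have hcn := hc0 n
    have hacn : a n < c n := lt_of_lt_of_le (by linarith) (hca n)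
    have hE0 : (0:ℝ) < Real.exp (c n ^ 4 / (4 * b n)) := Real.exp_pos _
    have hsplit : I n = (∫ t in Set.Ioc (a n) (c n), (1 + t ^ 2 / (2 * b n)) ^ (-(b n)))
        + ∫ t in Set.Ioi (c n), (1 + t ^ 2 / (2 * b n)) ^ (-(b n)) := by
      simp only [hIdef]
      rw [← setIntegral_union (Set.Ioc_disjoint_Ioi le_rfl) measurableSet_Ioi
        ((TA_f_int (hb n) (a n)).mono_set Set.Ioc_subset_Ioi_self) (TA_f_int (hb n) (c n)),
        Set.Ioc_union_Ioi_eq_Ioi hacn.le]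
    have hpartA : (∫ t in Set.Ioc (a n) (c n), (1 + t ^ 2 / (2 * b n)) ^ (-(b n)))
        ≤ Real.exp (c n ^ 4 / (4 * b n)) * G n := by
      have step1 : (∫ t in Set.Ioc (a n) (c n), (1 + t ^ 2 / (2 * b n)) ^ (-(b n)))
          ≤ ∫ t in Set.Ioc (a n) (c n), Real.exp (c n ^ 4 / (4 * b n)) * Real.exp (-t ^ 2 / 2) := by
        refine setIntegral_mono_on ((TA_f_int (hb n) (a n)).mono_set Set.Ioc_subset_Ioi_self)
          (((TA_gauss_int (a n)).mono_set Set.Ioc_subset_Ioi_self).const_mul _)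
          measurableSet_Ioc fun t ht => ?_
        have ht0 : 0 ≤ t := le_trans (ha n) (le_of_lt ht.1)
        calc (1 + t ^ 2 / (2 * b n)) ^ (-(b n))
            ≤ Real.exp (-t ^ 2 / 2 + t ^ 4 / (4 * b n)) := TA_ptup hbn t
          _ = Real.exp (t ^ 4 / (4 * b n)) * Real.exp (-t ^ 2 / 2) := by
              rw [← Real.exp_add]; ring_nf
          _ ≤ Real.exp (c n ^ 4 / (4 * b n)) * Real.exp (-t ^ 2 / 2) := by
              refine mul_le_mul_of_nonneg_right (Real.exp_le_exp.2 ?_) (Real.exp_pos _).le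
              have h4 : t ^ 4 ≤ c n ^ 4 := pow_le_pow_left₀ ht0 ht.2 4
              exact (div_le_div_iff_of_pos_right (by positivity)).2 h4
      have step2 : (∫ t in Set.Ioc (a n) (c n), Real.exp (-t ^ 2 / 2)) ≤ G n := by
        refine setIntegral_mono_set (TA_gauss_int (a n)) ?_ ?_
        · filter_upwards with t
          exact (Real.exp_pos _).le
        · exact (Set.Ioc_subset_Ioi_self).eventuallyLE
      calc (∫ t in Set.Ioc (a n) (c n), (1 + t ^ 2 / (2 * b n)) ^ (-(b n)))
          ≤ ∫ t in Set.Ioc (a n) (c n),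
              Real.exp (c n ^ 4 / (4 * b n)) * Real.exp (-t ^ 2 / 2) := step1
        _ = Real.exp (c n ^ 4 / (4 * b n)) * ∫ t in Set.Ioc (a n) (c n), Real.exp (-t ^ 2 / 2) :=
            MeasureTheory.integral_const_mul _ _
        _ ≤ Real.exp (c n ^ 4 / (4 * b n)) * G n := mul_le_mul_of_nonneg_left step2 hE0.le
    have hpartB : (∫ t in Set.Ioi (c n), (1 + t ^ 2 / (2 * b n)) ^ (-(b n))) ≤ K n * G n := by
      have hbase : (0:ℝ) < 1 + c n ^ 2 / (2 * b n) := by positivity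
      have step1 : (∫ t in Set.Ioi (c n), (1 + t ^ 2 / (2 * b n)) ^ (-(b n)))
          ≤ ∫ t in Set.Ioi (c n), (1 + c n * t / (2 * b n)) ^ (-(b n)) := by
        refine setIntegral_mono_on (TA_f_int (hb n) (c n)) (TA_lin_int hb1 hcn)
          measurableSet_Ioi fun t ht => ?_
        have ht0 : 0 < t := lt_trans hcn ht
        refine Real.rpow_le_rpow_of_nonpos (by positivity) ?_ (by linarith)
        have hct : c n * t ≤ t ^ 2 := by nlinarith [le_of_lt (Set.mem_Ioi.1 ht)]
        have := (div_le_div_iff_of_pos_right (show (0:ℝ) < 2 * b n by positivity)).2 hct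
        linarith
      have step4 : (1 + c n ^ 2 / (2 * b n)) ^ (-(b n))
          ≤ Real.exp (c n ^ 4 / (4 * b n)) * Real.exp (-(c n) ^ 2 / 2) := by
        calc (1 + c n ^ 2 / (2 * b n)) ^ (-(b n))
            ≤ Real.exp (-(c n) ^ 2 / 2 + c n ^ 4 / (4 * b n)) := TA_ptup hbn (c n)
          _ = _ := by rw [← Real.exp_add]; ring_nf
      have step5 : Real.exp (-(c n) ^ 2 / 2) ≤ G n := by
        refine le_trans ?_ (TA_G_lower (ha n))
        apply Real.exp_le_exp.2
        have h5 : (a n + 1) ^ 2 ≤ c n ^ 2 := pow_le_pow_left₀ (by linarith [ha n]) (hca n) 2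
        linarith
      have hKfac : (0:ℝ) ≤ 2 * b n / (c n * (b n - 1)) * (1 + c n ^ 2 / (2 * b n)) := by
        have h5 : (0:ℝ) < b n - 1 := by linarith
        positivity
      calc (∫ t in Set.Ioi (c n), (1 + t ^ 2 / (2 * b n)) ^ (-(b n)))
          ≤ ∫ t in Set.Ioi (c n), (1 + c n * t / (2 * b n)) ^ (-(b n)) := step1
        _ = 2 * b n / (c n * (b n - 1)) * (1 + c n ^ 2 / (2 * b n)) ^ (1 - b n) :=
            TA_lin_tail hb1 hcn
        _ = 2 * b n / (c n * (b n - 1)) * (1 + c n ^ 2 / (2 * b n))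
            * (1 + c n ^ 2 / (2 * b n)) ^ (-(b n)) := by
            rw [show (1:ℝ) - b n = 1 + (-(b n)) from by ring, Real.rpow_add hbase,
              Real.rpow_one]
            ring
        _ ≤ 2 * b n / (c n * (b n - 1)) * (1 + c n ^ 2 / (2 * b n))
            * (Real.exp (c n ^ 4 / (4 * b n)) * Real.exp (-(c n) ^ 2 / 2)) :=
            mul_le_mul_of_nonneg_left step4 hKfac
        _ = K n * Real.exp (-(c n) ^ 2 / 2) := by simp only [hKdef]; ring
        _ ≤ K n * G n := by
            refine mul_le_mul_of_nonneg_left step5 ?_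
            simp only [hKdef]
            exact mul_nonneg hKfac (Real.exp_pos _).le
    have hkey : I n ≤ (Real.exp (c n ^ 4 / (4 * b n)) + K n) * G n := by
      rw [hsplit]
      calc _ ≤ Real.exp (c n ^ 4 / (4 * b n)) * G n + K n * G n := add_le_add hpartA hpartB
        _ = (Real.exp (c n ^ 4 / (4 * b n)) + K n) * G n := by ring
    rw [div_le_iff₀ (hGpos n)]
    exact hkey
  have key1 : Tendsto (fun n => I n / G n) atTop (nhds 1) := by
    have hEK : Tendsto (fun n => Real.exp (c n ^ 4 / (4 * b n)) + K n) atTop (nhds 1) := by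
      simpa using hE.add hK
    exact tendsto_of_tendsto_of_tendsto_of_le_of_le' tendsto_const_nhds hEK
      (Eventually.of_forall hone) hup
  refine ⟨key1, fun hatop => ?_⟩
  have hGM : Tendsto (fun n => G n / (Real.exp (-(a n) ^ 2 / 2) / a n)) atTop (nhds 1) := by
    have hlowt : Tendsto (fun n => a n ^ 2 / (a n ^ 2 + 1)) atTop (nhds 1) := by
      have h1 : Tendsto (fun n => (1:ℝ) / (a n ^ 2 + 1)) atTop (nhds 0) := by
        apply tendsto_const_nhds.div_atTop
        apply tendsto_atTop_mono (fun n => ?_) hatop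
        nlinarith [sq_nonneg (a n - 1)]
      have h2 : Tendsto (fun n => 1 - (1:ℝ) / (a n ^ 2 + 1)) atTop (nhds 1) := by
        have h2' := (tendsto_const_nhds :
          Tendsto (fun _ : ℕ => (1:ℝ)) atTop (nhds 1)).sub h1
        simpa using h2'
      refine h2.congr fun n => ?_
      have h3 : a n ^ 2 + 1 ≠ 0 := by positivity
      field_simp
      ring
    refine tendsto_of_tendsto_of_tendsto_of_le_of_le' hlowt tendsto_const_nhds ?_ ?_
    · filter_upwards [hatop.eventually_ge_atTop 1] with n h1
      have ha0 : (0:ℝ) < a n := by linarith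
      have he : (0:ℝ) < Real.exp (-(a n) ^ 2 / 2) := Real.exp_pos _
      rw [div_div_eq_mul_div, le_div_iff₀ he]
      calc a n ^ 2 / (a n ^ 2 + 1) * Real.exp (-(a n) ^ 2 / 2)
          = a n * (a n / (a n ^ 2 + 1) * Real.exp (-(a n) ^ 2 / 2)) := by ring
        _ ≤ a n * G n := mul_le_mul_of_nonneg_left (TA_mills_lower h1) ha0.le
        _ = G n * a n := mul_comm _ _
    · filter_upwards [hatop.eventually_ge_atTop 1] with n h1
      have ha0 : (0:ℝ) < a n := by linarith
      rw [div_le_one (by positivity)]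
      exact TA_mills_upper ha0
  have hmul := key1.mul hGM
  rw [one_mul] at hmul
  refine hmul.congr' ?_
  filter_upwards [hatop.eventually_ge_atTop 1] with n h1
  have ha0 : (0:ℝ) < a n := by linarith
  have hGne : G n ≠ 0 := (hGpos n).ne'
  have he : Real.exp (-(a n) ^ 2 / 2) ≠ 0 := (Real.exp_pos _).ne'
  field_simp
  simp only [hIdef]
  ring_nf
  congr 1
  ext t
  ring


end
end

section
/- Let (a_n) and (b_n) be sequences of real numbers with a_n ≥ 0, b_n > 1/2 and b_n → ∞. If a_n²/b_n → ∞, then ∫_{a_n}^∞ (1 + t²/(2b_n))^{-b_n} dt ∼ (1/√(2b_n)) · (1 + a_n²/(2b_n))^{-(b_n - 1/2)} as n → ∞. -/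
open MeasureTheory Filter Set
open scoped ENNReal Pointwise RealInnerProductSpace

noncomputable section

open scoped Topology

lemma aux_integral (A B p : ℝ) (hA : 0 ≤ A) (hB : 0 < B) (hp : 1 < p) :
    IntegrableOn (fun t => t * (1 + t ^ 2 / B) ^ (-p)) (Ioi A) volume ∧
      ∫ t in Ioi A, t * (1 + t ^ 2 / B) ^ (-p)
        = B / (2 * (p - 1)) * (1 + A ^ 2 / B) ^ (-(p - 1)) := by
  have hp1 : p - 1 ≠ 0 := by linarith
  have hpos : ∀ t : ℝ, 0 < 1 + t ^ 2 / B := fun t =>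
    add_pos_of_pos_of_nonneg one_pos (div_nonneg (sq_nonneg t) hB.le)
  set g : ℝ → ℝ := fun t => -(B / (2 * (p - 1))) * (1 + t ^ 2 / B) ^ (-(p - 1)) with hg
  have hderiv : ∀ t ∈ Ici A, HasDerivAt g (t * (1 + t ^ 2 / B) ^ (-p)) t := by
    intro t _
    have h1 : HasDerivAt (fun t : ℝ => 1 + t ^ 2 / B) (2 * t / B) t := by
      simpa using ((hasDerivAt_pow 2 t).div_const B).const_add 1
    have h2 := (h1.rpow_const (p := -(p - 1)) (Or.inl (hpos t).ne')).const_mul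
      (-(B / (2 * (p - 1))))
    refine h2.congr_deriv ?_
    rw [show -(p - 1) - 1 = -p by ring]
    field_simp
  have hnn : ∀ t ∈ Ioi A, 0 ≤ t * (1 + t ^ 2 / B) ^ (-p) := by
    intro t ht
    exact mul_nonneg (hA.trans ht.le) (Real.rpow_nonneg (hpos t).le _)
  have htop : Tendsto (fun t : ℝ => 1 + t ^ 2 / B) atTop atTop := by
    apply tendsto_atTop_add_const_left
    exact (tendsto_pow_atTop two_ne_zero).atTop_div_const hB
  have hlim : Tendsto g atTop (𝓝 0) := by
    have h0 := ((tendsto_rpow_neg_atTop (by linarith : (0:ℝ) < p - 1)).comp htop).const_mul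
      (-(B / (2 * (p - 1))))
    simpa [hg, Function.comp] using h0
  refine ⟨integrableOn_Ioi_deriv_of_nonneg' hderiv hnn hlim, ?_⟩
  rw [integral_Ioi_of_hasDerivAt_of_nonneg' hderiv hnn hlim]
  simp only [hg]
  ring

lemma integrableOn_main {A b : ℝ} (hA : 0 < A) (hb : 1 < b) :
    IntegrableOn (fun t : ℝ => (1 + t ^ 2 / (2 * b)) ^ (-b)) (Ioi A) volume := by
  have hB : (0:ℝ) < 2 * b := by linarith
  have hpos : ∀ t : ℝ, 0 < 1 + t ^ 2 / (2 * b) := fun t =>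
    add_pos_of_pos_of_nonneg one_pos (div_nonneg (sq_nonneg t) hB.le)
  have hint := ((aux_integral A (2 * b) b hA.le hB hb).1).const_mul A⁻¹
  refine Integrable.mono hint ?_ ?_
  · refine (Continuous.aestronglyMeasurable ?_).restrict
    exact (continuous_const.add ((continuous_pow 2).div_const _)).rpow_const
      fun t => Or.inl (hpos t).ne'
  · refine (ae_restrict_iff' measurableSet_Ioi).2 (ae_of_all _ fun t ht => ?_)
    have ht0 : 0 < t := hA.trans ht
    have hr : (0:ℝ) ≤ (1 + t ^ 2 / (2 * b)) ^ (-b) := Real.rpow_nonneg (hpos t).le _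
    rw [Real.norm_of_nonneg hr, Real.norm_of_nonneg (by positivity)]
    have h1 : (1:ℝ) ≤ A⁻¹ * t := by
      rw [inv_mul_eq_div, le_div_iff₀ hA]; simpa using ht.le
    calc (1 + t ^ 2 / (2 * b)) ^ (-b) = 1 * (1 + t ^ 2 / (2 * b)) ^ (-b) := by ring
      _ ≤ (A⁻¹ * t) * (1 + t ^ 2 / (2 * b)) ^ (-b) := by
          exact mul_le_mul_of_nonneg_right h1 hr
      _ = A⁻¹ * (t * (1 + t ^ 2 / (2 * b)) ^ (-b)) := by ring

lemma lower_bd {A b : ℝ} (hA : 0 < A) (hb : 1 < b) :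
    2 * b / (2 * b - 1) *
        (1 / Real.sqrt (2 * b) * (1 + A ^ 2 / (2 * b)) ^ (-(b - 1 / 2)))
      ≤ ∫ t in Ioi A, (1 + t ^ 2 / (2 * b)) ^ (-b) := by
  have hB : (0:ℝ) < 2 * b := by linarith
  have hpos : ∀ t : ℝ, 0 < 1 + t ^ 2 / (2 * b) := fun t =>
    add_pos_of_pos_of_nonneg one_pos (div_nonneg (sq_nonneg t) hB.le)
  have hs : (0:ℝ) < Real.sqrt (2 * b) := Real.sqrt_pos.2 hB
  have haux := aux_integral A (2 * b) (b + 1 / 2) hA.le hB (by linarith)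
  have hval := haux.2
  rw [show b + 1 / 2 - 1 = b - 1 / 2 by ring] at hval
  have hmono : (∫ t in Ioi A, (Real.sqrt (2 * b))⁻¹ *
        (t * (1 + t ^ 2 / (2 * b)) ^ (-(b + 1 / 2))))
      ≤ ∫ t in Ioi A, (1 + t ^ 2 / (2 * b)) ^ (-b) := by
    refine setIntegral_mono_on (haux.1.const_mul _) (integrableOn_main hA hb)
      measurableSet_Ioi fun t ht => ?_
    have ht0 : 0 < t := hA.trans ht
    set u := 1 + t ^ 2 / (2 * b) with hu
    have hu0 : 0 < u := hpos t
    have key : t * u ^ (-(1 / 2 : ℝ)) ≤ Real.sqrt (2 * b) := by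
      have h1 : t / Real.sqrt (2 * b) ≤ Real.sqrt u := by
        have h0 : Real.sqrt (t ^ 2 / (2 * b)) ≤ Real.sqrt u :=
          Real.sqrt_le_sqrt (by rw [hu]; linarith)
        rwa [Real.sqrt_div (sq_nonneg t) (2 * b), Real.sqrt_sq ht0.le] at h0
      have h2 : u ^ (-(1 / 2 : ℝ)) = (Real.sqrt u)⁻¹ := by
        rw [Real.rpow_neg hu0.le, Real.sqrt_eq_rpow]
      rw [h2]
      have hsu : 0 < Real.sqrt u := Real.sqrt_pos.2 hu0
      rw [mul_inv_le_iff₀ hsu]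
      rw [div_le_iff₀ hs] at h1
      linarith [h1]
    rw [show -(b + 1 / 2) = -b + -(1 / 2 : ℝ) by ring, Real.rpow_add hu0]
    have hrb : (0:ℝ) ≤ u ^ (-b) := Real.rpow_nonneg hu0.le _
    calc (Real.sqrt (2 * b))⁻¹ * (t * (u ^ (-b) * u ^ (-(1 / 2 : ℝ))))
        = (Real.sqrt (2 * b))⁻¹ * ((t * u ^ (-(1 / 2 : ℝ))) * u ^ (-b)) := by ring
      _ ≤ (Real.sqrt (2 * b))⁻¹ * (Real.sqrt (2 * b) * u ^ (-b)) := by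
          exact mul_le_mul_of_nonneg_left (mul_le_mul_of_nonneg_right key hrb)
            (inv_nonneg.2 hs.le)
      _ = u ^ (-b) := by field_simp
  refine le_trans (le_of_eq ?_) hmono
  rw [MeasureTheory.integral_const_mul, hval,
    show (2:ℝ) * (b - 1 / 2) = 2 * b - 1 by ring]
  ring

lemma upper_bd {A b : ℝ} (hA : 0 < A) (hb : 1 < b) :
    (∫ t in Ioi A, (1 + t ^ 2 / (2 * b)) ^ (-b))
      ≤ (b / (b - 1) * Real.sqrt (1 + 2 * b / A ^ 2)) *
          (1 / Real.sqrt (2 * b) * (1 + A ^ 2 / (2 * b)) ^ (-(b - 1 / 2))) := by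
  have hB : (0:ℝ) < 2 * b := by linarith
  have hpos : ∀ t : ℝ, 0 < 1 + t ^ 2 / (2 * b) := fun t =>
    add_pos_of_pos_of_nonneg one_pos (div_nonneg (sq_nonneg t) hB.le)
  have hs : (0:ℝ) < Real.sqrt (2 * b) := Real.sqrt_pos.2 hB
  have haux := aux_integral A (2 * b) b hA.le hB hb
  have hmono : (∫ t in Ioi A, (1 + t ^ 2 / (2 * b)) ^ (-b))
      ≤ ∫ t in Ioi A, A⁻¹ * (t * (1 + t ^ 2 / (2 * b)) ^ (-b)) := by
    refine setIntegral_mono_on (integrableOn_main hA hb) (haux.1.const_mul _)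
      measurableSet_Ioi fun t ht => ?_
    have hr : (0:ℝ) ≤ (1 + t ^ 2 / (2 * b)) ^ (-b) := Real.rpow_nonneg (hpos t).le _
    have h1 : (1:ℝ) ≤ A⁻¹ * t := by
      rw [inv_mul_eq_div, le_div_iff₀ hA]; simpa using ht.le
    calc (1 + t ^ 2 / (2 * b)) ^ (-b) = 1 * (1 + t ^ 2 / (2 * b)) ^ (-b) := by ring
      _ ≤ (A⁻¹ * t) * (1 + t ^ 2 / (2 * b)) ^ (-b) := mul_le_mul_of_nonneg_right h1 hr
      _ = A⁻¹ * (t * (1 + t ^ 2 / (2 * b)) ^ (-b)) := by ring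
  refine hmono.trans (le_of_eq ?_)
  rw [MeasureTheory.integral_const_mul, haux.2]
  set u := 1 + A ^ 2 / (2 * b) with hu
  have hu0 : 0 < u := hpos A
  rw [show -(b - 1) = -(b - 1 / 2) + 1 / 2 by ring, Real.rpow_add hu0,
    ← Real.sqrt_eq_rpow]
  have hrel : Real.sqrt (2 * b) * Real.sqrt u = A * Real.sqrt (1 + 2 * b / A ^ 2) := by
    rw [← Real.sqrt_mul hB.le, show A = Real.sqrt (A ^ 2) from (Real.sqrt_sq hA.le).symm]
    rw [← Real.sqrt_mul (sq_nonneg A)]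
    congr 1
    rw [hu, Real.sq_sqrt (sq_nonneg A)]; field_simp; ring
  have hsu : Real.sqrt u = A * Real.sqrt (1 + 2 * b / A ^ 2) / Real.sqrt (2 * b) := by
    rw [eq_div_iff hs.ne']; linarith [hrel]
  rw [hsu]
  have hb1 : b - 1 ≠ 0 := by linarith
  field_simp

lemma tendsto_self_div_sub_one : Tendsto (fun x : ℝ => x / (x - 1)) atTop (nhds 1) := by
  have h1 : Tendsto (fun x : ℝ => x - 1) atTop atTop :=
    tendsto_atTop_add_const_right _ (-1) tendsto_id
  have h2 : Tendsto (fun x : ℝ => 1 + (x - 1)⁻¹) atTop (nhds 1) := by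
    simpa using tendsto_const_nhds.add (tendsto_inv_atTop_zero.comp h1)
  refine h2.congr' ?_
  filter_upwards [eventually_gt_atTop (1 : ℝ)] with x hx
  have : x - 1 ≠ 0 := by linarith
  field_simp
  ring



/-- Lemma 2.4 (b): asymptotics of the tail integral in the heavy-tail regime. -/
theorem tail_integral_heavy_regime
    (a b : ℕ → ℝ) (ha : ∀ n, 0 ≤ a n) (hb : ∀ n, 1 / 2 < b n)
    (hbtop : Tendsto b atTop atTop)
    (h : Tendsto (fun n : ℕ => (a n) ^ 2 / b n) atTop atTop) :
    Tendsto (fun n : ℕ =>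
        (∫ t in Set.Ioi (a n), (1 + t ^ 2 / (2 * b n)) ^ (-(b n))) /
          (1 / Real.sqrt (2 * b n) *
            (1 + (a n) ^ 2 / (2 * b n)) ^ (-(b n - 1 / 2)))) atTop (nhds 1) := by
  have hb1 : ∀ᶠ n in atTop, 1 < b n := hbtop.eventually_gt_atTop 1
  have hab : ∀ᶠ n in atTop, 1 ≤ (a n) ^ 2 / b n := h.eventually_ge_atTop 1
  have hA : ∀ᶠ n in atTop, 0 < a n := by
    filter_upwards [hb1, hab] with n h1 h2
    have hbn : (0:ℝ) < b n := by linarith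
    have : (0:ℝ) < a n ^ 2 := lt_of_lt_of_le hbn (by
      rwa [le_div_iff₀ hbn, one_mul] at h2)
    rcases (ha n).lt_or_eq with h' | h'
    · exact h'
    · exfalso; rw [← h'] at this; simp at this
  -- lower ratio ℓ and upper ratio υ
  have hl : Tendsto (fun n => 2 * b n / (2 * b n - 1)) atTop (nhds 1) :=
    tendsto_self_div_sub_one.comp (hbtop.const_mul_atTop two_pos)
  have hsq : Tendsto (fun n => Real.sqrt (1 + 2 * b n / (a n) ^ 2)) atTop (nhds 1) := by
    have h0 : Tendsto (fun n => 2 * b n / (a n) ^ 2) atTop (nhds 0) := by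
      have h1 : Tendsto (fun n => ((a n) ^ 2 / b n)⁻¹) atTop (nhds 0) :=
        tendsto_inv_atTop_zero.comp h
      have h2 := h1.const_mul (2:ℝ)
      rw [mul_zero] at h2
      refine h2.congr' ?_
      filter_upwards [hb1, hA] with n h1n hAn
      have hbn : b n ≠ 0 := by linarith
      have han : a n ≠ 0 := hAn.ne'
      field_simp
    have := (Real.continuous_sqrt.tendsto 1).comp (by simpa using tendsto_const_nhds.add h0)
    simpa [Function.comp_def] using this
  have hu : Tendsto (fun n => b n / (b n - 1) * Real.sqrt (1 + 2 * b n / (a n) ^ 2))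
      atTop (nhds 1) := by
    have := (tendsto_self_div_sub_one.comp hbtop).mul hsq
    simpa using this
  refine tendsto_of_tendsto_of_tendsto_of_le_of_le' hl hu ?_ ?_
  · filter_upwards [hb1, hA] with n h1 h2
    have hT : 0 < 1 / Real.sqrt (2 * b n) * (1 + (a n) ^ 2 / (2 * b n)) ^ (-(b n - 1 / 2)) := by
      have hB : (0:ℝ) < 2 * b n := by linarith
      have : (0:ℝ) < 1 + (a n) ^ 2 / (2 * b n) := by positivity
      positivity
    rw [le_div_iff₀ hT]
    exact lower_bd h2 h1
  · filter_upwards [hb1, hA] with n h1 h2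
    have hT : 0 < 1 / Real.sqrt (2 * b n) * (1 + (a n) ^ 2 / (2 * b n)) ^ (-(b n - 1 / 2)) := by
      have hB : (0:ℝ) < 2 * b n := by linarith
      have : (0:ℝ) < 1 + (a n) ^ 2 / (2 * b n) := by positivity
      positivity
    rw [div_le_iff₀ hT]
    exact upper_bd h2 h1

end
end
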